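/- Along trajectories of the closed-loop error dynamics with the control law τ = −k_Q ε − k_Ω Ω_err + I Ω̇_des − I(Ω × Ω_des) + Ω × IΩ, the time derivative of the Lyapunov function V = k_Q ‖q_err − q_err_des‖² + (1/2) Ω_errᵀ I Ω_err satisfies V̇ = −k_Ω Ω_errᵀ Ω_err ≤ 0. -/

import Mathlib

open Matrix

/-- The pure quaternion `(0, Ω)` with vector part `Ω ∈ ℝ³`. -/
def pureQuat (v : Fin 3 → ℝ) : Quaternion ℝ := ⟨0, v 0, v 1, v 2⟩

/-- Derivative of `‖q − 1‖²` along the quaternion kinematics. -/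
lemma quat_norm_sq_deriv (q : ℝ → Quaternion ℝ) (w : Fin 3 → ℝ) (t : ℝ)
    (hq : HasDerivAt q ((1/2:ℝ) • (q t * pureQuat w)) t) :
    HasDerivAt (fun s => ‖q s - 1‖ ^ 2)
      ((q t).imI * w 0 + (q t).imJ * w 1 + (q t).imK * w 2) t := by
  have hq1 : HasDerivAt (fun s => q s - 1) ((1/2:ℝ) • (q t * pureQuat w)) t :=
    hq.sub_const 1
  have h := HasDerivAt.inner ℝ hq1 hq1
  have heq : (fun s => ‖q s - 1‖ ^ 2) = fun s => inner (𝕜 := ℝ) (q s - 1) (q s - 1) := by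
    funext s; rw [real_inner_self_eq_norm_sq]
  rw [heq]
  refine HasDerivAt.congr_deriv h ?_
  simp [Quaternion.inner_def, Quaternion.re_mul, Quaternion.re_sub,
    Quaternion.re_smul, Quaternion.re_star, Quaternion.imI_star, Quaternion.imJ_star,
    Quaternion.imK_star, Quaternion.imI_sub, Quaternion.imJ_sub, Quaternion.imK_sub,
    Quaternion.imI_smul, Quaternion.imJ_smul, Quaternion.imK_smul, Quaternion.imI_mul, Quaternion.imJ_mul, Quaternion.imK_mul, Quaternion.re_one]
  simp [pureQuat]
  ring

/-- Derivative of the quadratic form `v ⬝ᵥ I v` for a symmetric matrix `I`. -/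
lemma quadform_deriv (I : Matrix (Fin 3) (Fin 3) ℝ) (hIsymm : I.IsSymm)
    (v dv : ℝ → Fin 3 → ℝ) (t : ℝ)
    (hv : ∀ t i, HasDerivAt (fun s => v s i) (dv t i) t) :
    HasDerivAt (fun s => v s ⬝ᵥ (I *ᵥ v s)) (2 * (v t ⬝ᵥ (I *ᵥ dv t))) t := by
  have key : HasDerivAt (fun s => ∑ i, ∑ j, v s i * (I i j * v s j))
      (∑ i, ∑ j, (dv t i * (I i j * v t j) + v t i * (I i j * dv t j))) t := by
    apply HasDerivAt.fun_sum; intro i _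
    apply HasDerivAt.fun_sum; intro j _
    exact (hv t i).mul ((hv t j).const_mul (I i j))
  have heq : (fun s => v s ⬝ᵥ (I *ᵥ v s)) = fun s => ∑ i, ∑ j, v s i * (I i j * v s j) := by
    funext s; simp [dotProduct, Matrix.mulVec, Finset.mul_sum]
  rw [heq]
  convert key using 1
  have hsym : ∀ i j, I j i = I i j := fun i j => hIsymm.apply i j
  simp only [dotProduct, Matrix.mulVec, Finset.mul_sum, Finset.sum_add_distrib, two_mul]
  congr 1
  rw [Finset.sum_comm]
  apply Finset.sum_congr rfl; intro i _
  apply Finset.sum_congr rfl; intro j _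
  rw [hsym i j]; ring

/-- Along trajectories of the closed-loop error dynamics with the control law
`τ = −k_Q ε − k_Ω Ω_err + I Ω̇_des − I (Ω × Ω_des) + Ω × I Ω`, the Lyapunov function
`V = k_Q ‖q_err − 1‖² + (1/2) Ω_errᵀ I Ω_err` satisfies
`V̇ = −k_Ω Ω_errᵀ Ω_err ≤ 0`. -/
theorem lyapunov_derivative_along_closed_loop
    -- inertia matrix, symmetric positive definite
    (I : Matrix (Fin 3) (Fin 3) ℝ) (hIsymm : I.IsSymm) (hIpd : I.PosDef)
    -- scalar gains
    (kQ kΩ : ℝ) (hkQ : 0 < kQ) (hkΩ : 0 < kΩ)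
    -- angular velocity, desired angular velocity, their derivatives
    (Ω Ωdes dΩ dΩdes : ℝ → Fin 3 → ℝ)
    (hΩ : ∀ t i, HasDerivAt (fun s => Ω s i) (dΩ t i) t)
    (hΩdes : ∀ t i, HasDerivAt (fun s => Ωdes s i) (dΩdes t i) t)
    -- angular velocity error `Ω_err = Ω − Ω_des` with its error dynamics
    -- `Ω̇_err = Ω̇ − Ω̇_des + Ω × Ω_des`
    (Ωerr dΩerr : ℝ → Fin 3 → ℝ) (hΩerr : ∀ t, Ωerr t = Ω t - Ωdes t)
    (hΩerrDeriv : ∀ t i, HasDerivAt (fun s => Ωerr s i) (dΩerr t i) t)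
    (herrdyn : ∀ t, dΩerr t = dΩ t - dΩdes t + Ω t ⨯₃ Ωdes t)
    -- unit error quaternion with vector part ε, satisfying the error kinematics
    (qerr : ℝ → Quaternion ℝ) (hqunit : ∀ t, ‖qerr t‖ = 1)
    (ε : ℝ → Fin 3 → ℝ)
    (hε : ∀ t, ε t = ![(qerr t).imI, (qerr t).imJ, (qerr t).imK])
    (hqkin : ∀ t, HasDerivAt qerr ((1 / 2 : ℝ) • (qerr t * pureQuat (Ωerr t))) t)
    -- control law
    (τ : ℝ → Fin 3 → ℝ)
    (hτ : ∀ t, τ t = -kQ • ε t - kΩ • Ωerr t + I *ᵥ dΩdes t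
        - I *ᵥ (Ω t ⨯₃ Ωdes t) + Ω t ⨯₃ (I *ᵥ Ω t))
    -- rigid body attitude dynamics `I Ω̇ = τ − Ω × I Ω`
    (hdyn : ∀ t, I *ᵥ dΩ t = τ t - Ω t ⨯₃ (I *ᵥ Ω t)) :
    ∀ t, HasDerivAt
        (fun s => kQ * ‖qerr s - 1‖ ^ 2 + (1 / 2) * (Ωerr s ⬝ᵥ (I *ᵥ Ωerr s)))
        (-kΩ * (Ωerr t ⬝ᵥ Ωerr t)) t ∧
      -kΩ * (Ωerr t ⬝ᵥ Ωerr t) ≤ 0 := by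
  intro t
  -- closed-loop error dynamics: `I Ω̇_err = −k_Q ε − k_Ω Ω_err`
  have hIde : I *ᵥ dΩerr t = -kQ • ε t - kΩ • Ωerr t := by
    have h1 : I *ᵥ dΩ t = -kQ • ε t - kΩ • Ωerr t + I *ᵥ dΩdes t
        - I *ᵥ (Ω t ⨯₃ Ωdes t) := by
      rw [hdyn t, hτ t]; abel
    rw [herrdyn t, Matrix.mulVec_add, Matrix.mulVec_sub, h1]; abel
  constructor
  · have h1 := quat_norm_sq_deriv qerr (Ωerr t) t (hqkin t)
    have h2 := quadform_deriv I hIsymm Ωerr dΩerr t hΩerrDeriv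
    have hsum := (h1.const_mul kQ).add (h2.const_mul (1/2 : ℝ))
    refine HasDerivAt.congr_deriv hsum ?_
    rw [hIde, hε]
    simp only [dotProduct, Fin.sum_univ_three, Pi.sub_apply, Pi.smul_apply, smul_eq_mul,
      Pi.neg_apply, Matrix.cons_val_zero, Matrix.cons_val_one, Matrix.head_cons,
      Matrix.cons_val_two, Matrix.tail_cons]
    ring
  · have hnn : 0 ≤ Ωerr t ⬝ᵥ Ωerr t := by
      apply Finset.sum_nonneg; intro i _; exact mul_self_nonneg _
    have : 0 ≤ kΩ * (Ωerr t ⬝ᵥ Ωerr t) := mul_nonneg hkΩ.le hnn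
    linarith
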